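/- Let f: {0,1}^n → {-1,1} with total influence I(f), and let ε ∈ [0,1]. Then E[f(ω)f(ω_ε)] ≥ (1-ε)^{I(f)}. -/

import Mathlib

open Finset
open scoped symmDiff

noncomputable def expect {n : ℕ} (f : (Fin n → Bool) → ℝ) : ℝ :=
  (∑ ω : Fin n → Bool, f ω) / 2 ^ n

noncomputable def walsh {n : ℕ} (S : Finset (Fin n)) (ω : Fin n → Bool) : ℝ :=
  ∏ i ∈ S, (if ω i then -1 else 1)

noncomputable def walshCoeff {n : ℕ} (f : (Fin n → Bool) → ℝ) (S : Finset (Fin n)) : ℝ :=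
  expect (fun ω => f ω * walsh S ω)

noncomputable def noiseKernel {n : ℕ} (ε : ℝ) (ω ω' : Fin n → Bool) : ℝ :=
  ∏ i, (if ω i = ω' i then 1 - ε / 2 else ε / 2)

noncomputable def noiseE {n : ℕ} (ε : ℝ) (f g : (Fin n → Bool) → ℝ) : ℝ :=
  (∑ ω : Fin n → Bool, ∑ ω' : Fin n → Bool, noiseKernel ε ω ω' * f ω * g ω') / 2 ^ n

noncomputable def noiseP {n : ℕ} (ε : ℝ) (f : (Fin n → Bool) → ℝ) : ℝ :=
  (∑ ω : Fin n → Bool, ∑ ω' : Fin n → Bool,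
    noiseKernel ε ω ω' * (if f ω = f ω' then 0 else 1)) / 2 ^ n

noncomputable def influence {n : ℕ} (f : (Fin n → Bool) → ℝ) (i : Fin n) : ℝ :=
  expect (fun ω => if f ω = f (Function.update ω i (!ω i)) then 0 else 1)

noncomputable def totalInfluence {n : ℕ} (f : (Fin n → Bool) → ℝ) : ℝ :=
  ∑ i, influence f i

lemma sum_prod_bool {n : ℕ} (g : Fin n → Bool → ℝ) :
    ∑ ω : Fin n → Bool, ∏ i, g i (ω i) = ∏ i, (g i false + g i true) := by
  rw [← Fintype.piFinset_univ, Finset.sum_prod_piFinset]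
  exact Finset.prod_congr rfl fun i _ => by simp [Fintype.sum_bool, add_comm]

lemma walsh_full {n : ℕ} (S : Finset (Fin n)) (ω : Fin n → Bool) :
    walsh S ω = ∏ i, (if i ∈ S then (if ω i then (-1:ℝ) else 1) else 1) := by
  rw [walsh, Finset.prod_ite_mem, univ_inter]

lemma sum_walsh {n : ℕ} (S : Finset (Fin n)) :
    ∑ ω : Fin n → Bool, walsh S ω = if S = ∅ then (2:ℝ)^n else 0 := by
  simp_rw [walsh_full]
  rw [sum_prod_bool fun i b => if i ∈ S then (if b then (-1:ℝ) else 1) else 1]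
  by_cases hS : S = ∅
  · simp [hS]; norm_num
  · rw [if_neg hS]
    obtain ⟨i, hi⟩ := Finset.nonempty_iff_ne_empty.2 hS
    exact Finset.prod_eq_zero (mem_univ i) (by simp [hi])

lemma walsh_sq {n : ℕ} (S : Finset (Fin n)) (ω : Fin n → Bool) :
    walsh S ω * walsh S ω = 1 := by
  rw [walsh, ← Finset.prod_mul_distrib]
  exact Finset.prod_eq_one fun i _ => by by_cases h : ω i <;> simp [h]

lemma walsh_mul {n : ℕ} (S T : Finset (Fin n)) (ω : Fin n → Bool) :
    walsh S ω * walsh T ω = walsh (S ∆ T) ω := by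
  classical
  have hS : walsh S ω = walsh (S \ T) ω * walsh (S ∩ T) ω := by
    rw [walsh, walsh, walsh, ← Finset.prod_union (Finset.disjoint_sdiff_inter S T),
      Finset.sdiff_union_inter]
  have hT : walsh T ω = walsh (T \ S) ω * walsh (S ∩ T) ω := by
    rw [Finset.inter_comm, walsh, walsh, walsh,
      ← Finset.prod_union (Finset.disjoint_sdiff_inter T S), Finset.sdiff_union_inter]
  have hsd : walsh (S ∆ T) ω = walsh (S \ T) ω * walsh (T \ S) ω := by
    rw [walsh, walsh, walsh, ← Finset.prod_union (disjoint_sdiff_sdiff)]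
    congr 1
  rw [hS, hT, hsd]
  have h := walsh_sq (S ∩ T) ω
  calc walsh (S \ T) ω * walsh (S ∩ T) ω * (walsh (T \ S) ω * walsh (S ∩ T) ω)
      = walsh (S \ T) ω * walsh (T \ S) ω * (walsh (S ∩ T) ω * walsh (S ∩ T) ω) := by ring
    _ = _ := by rw [h, mul_one]

lemma sum_walsh_mul {n : ℕ} (S T : Finset (Fin n)) :
    ∑ ω : Fin n → Bool, walsh S ω * walsh T ω = if S = T then (2:ℝ)^n else 0 := by
  simp_rw [walsh_mul, sum_walsh]
  congr 1
  simp [Finset.symmDiff_eq_empty]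

lemma sum_walsh_walsh {n : ℕ} (ω ω' : Fin n → Bool) :
    ∑ S : Finset (Fin n), walsh S ω * walsh S ω' = if ω = ω' then (2:ℝ)^n else 0 := by
  have h1 : ∀ S : Finset (Fin n), walsh S ω * walsh S ω' =
      ∏ i ∈ S, ((if ω i then (-1:ℝ) else 1) * (if ω' i then -1 else 1)) := fun S => by
    rw [walsh, walsh, Finset.prod_mul_distrib]
  have h2 : ∑ S : Finset (Fin n), ∏ i ∈ S,
        ((if ω i then (-1:ℝ) else 1) * (if ω' i then -1 else 1))
      = ∏ i, (((if ω i then (-1:ℝ) else 1) * (if ω' i then -1 else 1)) + 1) := by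
    rw [Finset.prod_add, ← Finset.powerset_univ]
    exact Finset.sum_congr rfl fun S _ => by simp
  simp_rw [h1]
  rw [h2]
  by_cases h : ω = ω'
  · subst h
    rw [if_pos rfl]
    rw [Finset.prod_congr rfl (g := fun _ => (2:ℝ)) fun i _ => by cases hω : ω i <;> norm_num [hω]]
    simp
  · rw [if_neg h]
    obtain ⟨i, hi⟩ : ∃ i, ω i ≠ ω' i := by
      by_contra hc; push_neg at hc; exact h (funext hc)
    apply Finset.prod_eq_zero (mem_univ i)
    cases hω : ω i <;> cases hω' : ω' i <;> simp_all

lemma walsh_expansion {n : ℕ} (f : (Fin n → Bool) → ℝ) (ω : Fin n → Bool) :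
    ∑ S : Finset (Fin n), walshCoeff f S * walsh S ω = f ω := by
  have h1 : ∀ S : Finset (Fin n), walshCoeff f S * walsh S ω
      = (∑ ω', f ω' * (walsh S ω' * walsh S ω)) / 2^n := by
    intro S; rw [walshCoeff, _root_.expect, div_mul_eq_mul_div, Finset.sum_mul]
    congr 1; exact Finset.sum_congr rfl fun ω' _ => mul_assoc _ _ _
  simp_rw [h1, ← Finset.sum_div]
  rw [Finset.sum_comm]
  have h2 : ∀ ω' : Fin n → Bool, ∑ S : Finset (Fin n), f ω' * (walsh S ω' * walsh S ω)
      = f ω' * (if ω' = ω then (2:ℝ)^n else 0) := fun ω' => by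
    rw [← Finset.mul_sum, sum_walsh_walsh]
  simp_rw [h2, mul_ite, mul_zero]
  rw [Finset.sum_ite_eq' Finset.univ ω (fun ω' => f ω' * 2^n)]
  simp

lemma sum_expansion_sq {n : ℕ} (c : Finset (Fin n) → ℝ) :
    ∑ ω : Fin n → Bool, (∑ S, c S * walsh S ω) * (∑ T, c T * walsh T ω)
      = 2^n * ∑ S, c S ^ 2 := by
  have key : ∀ S T : Finset (Fin n), ∑ ω : Fin n → Bool,
      (c S * walsh S ω) * (c T * walsh T ω) = if S = T then c S ^ 2 * 2^n else 0 := by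
    intro S T
    have e : ∀ ω, (c S * walsh S ω) * (c T * walsh T ω)
        = c S * c T * (walsh S ω * walsh T ω) := fun ω => by ring
    simp_rw [e, ← Finset.mul_sum, sum_walsh_mul]
    by_cases h : S = T <;> simp [h] <;> ring
  calc ∑ ω : Fin n → Bool, (∑ S, c S * walsh S ω) * (∑ T, c T * walsh T ω)
      = ∑ ω : Fin n → Bool, ∑ S, ∑ T, (c S * walsh S ω) * (c T * walsh T ω) :=
        Finset.sum_congr rfl fun ω _ => by rw [Finset.sum_mul_sum]
    _ = ∑ S, ∑ T, ∑ ω : Fin n → Bool, (c S * walsh S ω) * (c T * walsh T ω) := by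
        rw [Finset.sum_comm]; exact Finset.sum_congr rfl fun S _ => Finset.sum_comm
    _ = ∑ S, ∑ T, if S = T then c S ^ 2 * 2^n else 0 := by simp_rw [key]
    _ = ∑ S : Finset (Fin n), c S ^ 2 * 2^n := by simp
    _ = 2^n * ∑ S, c S ^ 2 := by rw [← Finset.sum_mul]; ring

lemma kernel_walsh {n : ℕ} (ε : ℝ) (T : Finset (Fin n)) (ω : Fin n → Bool) :
    ∑ ω' : Fin n → Bool, noiseKernel ε ω ω' * walsh T ω'
      = (1-ε)^T.card * walsh T ω := by
  have h1 : ∀ ω' : Fin n → Bool, noiseKernel ε ω ω' * walsh T ω'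
      = ∏ i, ((if ω i = ω' i then 1 - ε/2 else ε/2) *
          (if i ∈ T then (if ω' i then (-1:ℝ) else 1) else 1)) := fun ω' => by
    rw [noiseKernel, walsh_full, Finset.prod_mul_distrib]
  simp_rw [h1]
  rw [sum_prod_bool fun i b => (if ω i = b then 1 - ε/2 else ε/2) *
    (if i ∈ T then (if b then (-1:ℝ) else 1) else 1)]
  have h2 : ∏ i, ((if ω i = false then 1 - ε/2 else ε/2) *
          (if i ∈ T then (if false then (-1:ℝ) else 1) else 1)
        + (if ω i = true then 1 - ε/2 else ε/2) *
          (if i ∈ T then (if true then (-1:ℝ) else 1) else 1))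
      = ∏ i, (if i ∈ T then (1-ε) * (if ω i then (-1:ℝ) else 1) else 1) := by
    apply Finset.prod_congr rfl; intro i _
    by_cases hi : i ∈ T <;> cases hω : ω i <;> simp [hi, hω] <;> ring
  rw [h2, Finset.prod_ite_mem, univ_inter, Finset.prod_mul_distrib, Finset.prod_const, walsh]

lemma noiseE_eq {n : ℕ} (ε : ℝ) (f : (Fin n → Bool) → ℝ) :
    noiseE ε f f = ∑ S : Finset (Fin n), walshCoeff f S ^ 2 * (1-ε)^S.card := by
  have step1 : ∀ ω : Fin n → Bool,
      ∑ ω' : Fin n → Bool, noiseKernel ε ω ω' * f ω * f ω'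
      = ∑ S : Finset (Fin n), walshCoeff f S * (1-ε)^S.card * (f ω * walsh S ω) := by
    intro ω
    have e1 : ∀ ω' : Fin n → Bool, noiseKernel ε ω ω' * f ω * f ω'
        = ∑ S : Finset (Fin n), walshCoeff f S * f ω * (noiseKernel ε ω ω' * walsh S ω') := by
      intro ω'
      conv_lhs => rw [show f ω' = ∑ S, walshCoeff f S * walsh S ω'
        from (walsh_expansion f ω').symm]
      rw [Finset.mul_sum]
      exact Finset.sum_congr rfl fun S _ => by ring
    simp_rw [e1]
    rw [Finset.sum_comm]
    apply Finset.sum_congr rfl; intro S _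
    rw [← Finset.mul_sum, kernel_walsh]
    ring
  rw [noiseE]
  simp_rw [step1]
  rw [Finset.sum_comm]
  have step2 : ∀ S : Finset (Fin n),
      ∑ ω : Fin n → Bool, walshCoeff f S * (1-ε)^S.card * (f ω * walsh S ω)
      = walshCoeff f S ^ 2 * (1-ε)^S.card * 2^n := by
    intro S
    rw [← Finset.mul_sum]
    have e2 : ∑ ω : Fin n → Bool, f ω * walsh S ω = 2^n * walshCoeff f S := by
      rw [walshCoeff, _root_.expect]; field_simp
    rw [e2]; ring
  simp_rw [step2]
  rw [← Finset.sum_mul, mul_div_assoc]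
  have : (2:ℝ)^n / 2^n = 1 := by
    field_simp
  rw [this, mul_one]

lemma card_fun_bool {n : ℕ} : ∑ _ω : Fin n → Bool, (1:ℝ) = 2^n := by
  rw [Finset.sum_const, Finset.card_univ]
  simp [Fintype.card_fun]

lemma parseval_one {n : ℕ} (f : (Fin n → Bool) → ℝ) (hb : ∀ ω, f ω = 1 ∨ f ω = -1) :
    ∑ S : Finset (Fin n), walshCoeff f S ^ 2 = 1 := by
  have h := sum_expansion_sq (walshCoeff f)
  simp_rw [walsh_expansion f] at h
  have h2 : ∑ ω : Fin n → Bool, f ω * f ω = 2^n := by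
    rw [Finset.sum_congr rfl (g := fun _ => (1:ℝ))
      fun ω _ => by rcases hb ω with h|h <;> rw [h] <;> norm_num]
    exact card_fun_bool
  rw [h2] at h
  have hne : ((2:ℝ)^n) ≠ 0 := by positivity
  field_simp at h
  linarith

lemma walsh_update {n : ℕ} (S : Finset (Fin n)) (ω : Fin n → Bool) (i : Fin n) :
    walsh S (Function.update ω i (!ω i)) = (if i ∈ S then (-1:ℝ) else 1) * walsh S ω := by
  by_cases hi : i ∈ S
  · rw [if_pos hi, walsh, walsh, ← Finset.mul_prod_erase _ _ hi, ← Finset.mul_prod_erase _ _ hi]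
    have h2 : ∏ j ∈ S.erase i, (if Function.update ω i (!ω i) j then (-1:ℝ) else 1)
        = ∏ j ∈ S.erase i, (if ω j then (-1:ℝ) else 1) :=
      Finset.prod_congr rfl fun j hj => by
        rw [Function.update_of_ne (Finset.ne_of_mem_erase hj)]
    rw [Function.update_self, h2]
    cases hω : ω i <;> simp <;> ring
  · rw [if_neg hi, one_mul, walsh, walsh]
    exact Finset.prod_congr rfl fun j hj => by
      rw [Function.update_of_ne (by rintro rfl; exact hi hj)]

lemma influence_eq {n : ℕ} (f : (Fin n → Bool) → ℝ) (hb : ∀ ω, f ω = 1 ∨ f ω = -1)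
    (i : Fin n) :
    influence f i = ∑ S : Finset (Fin n), (if i ∈ S then walshCoeff f S ^ 2 else 0) := by
  classical
  have hind : ∀ ω : Fin n → Bool,
      (if f ω = f (Function.update ω i (!ω i)) then (0:ℝ) else 1)
      = (f ω - f (Function.update ω i (!ω i)))^2 / 4 := by
    intro ω
    rcases hb ω with h1|h1 <;> rcases hb (Function.update ω i (!ω i)) with h2|h2 <;>
      rw [h1, h2] <;> norm_num
  set c : Finset (Fin n) → ℝ := fun S => if i ∈ S then 2 * walshCoeff f S else 0 with hc
  have hdiff : ∀ ω : Fin n → Bool,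
      f ω - f (Function.update ω i (!ω i)) = ∑ S, c S * walsh S ω := by
    intro ω
    conv_lhs => rw [← walsh_expansion f ω, ← walsh_expansion f (Function.update ω i (!ω i))]
    rw [← Finset.sum_sub_distrib]
    apply Finset.sum_congr rfl; intro S _
    rw [walsh_update]
    by_cases hi : i ∈ S <;> simp [hc, hi] <;> ring
  rw [influence, _root_.expect]
  simp_rw [hind, hdiff]
  have hsq : ∑ ω : Fin n → Bool, (∑ S, c S * walsh S ω)^2 / 4
      = (2^n * ∑ S, c S ^ 2) / 4 := by
    rw [← Finset.sum_div]
    congr 1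
    have h := sum_expansion_sq c
    simp only [pow_two] at h ⊢
    exact h
  rw [hsq]
  have hcs : ∀ S : Finset (Fin n), c S ^ 2 / 4
      = (if i ∈ S then walshCoeff f S ^ 2 else 0) := by
    intro S; by_cases hi : i ∈ S <;> simp [hc, hi] <;> ring
  have hne : ((2:ℝ)^n) ≠ 0 := by positivity
  have h4 : ((2:ℝ)^n * ∑ S, c S ^ 2)/4/2^n = (∑ S, c S ^ 2)/4 := by
    field_simp
  rw [h4, Finset.sum_div]
  exact Finset.sum_congr rfl fun S _ => hcs S

lemma totalInfluence_eq {n : ℕ} (f : (Fin n → Bool) → ℝ) (hb : ∀ ω, f ω = 1 ∨ f ω = -1) :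
    totalInfluence f = ∑ S : Finset (Fin n), (S.card : ℝ) * walshCoeff f S ^ 2 := by
  rw [totalInfluence]
  simp_rw [influence_eq f hb]
  rw [Finset.sum_comm]
  apply Finset.sum_congr rfl; intro S _
  rw [Finset.sum_ite_mem, univ_inter, Finset.sum_const, nsmul_eq_mul]

/-- E[f(ω)f(ω_ε)] ≥ (1-ε)^{I(f)} (Jensen applied to the spectral sample). -/
theorem noise_correlation_ge_rpow_influence {n : ℕ} (f : (Fin n → Bool) → ℝ)
    (hb : ∀ ω, f ω = 1 ∨ f ω = -1) (ε : ℝ) (hε : ε ∈ Set.Icc (0:ℝ) 1) :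
    (1 - ε) ^ (totalInfluence f) ≤ noiseE ε f f := by
  obtain ⟨hε0, hε1⟩ := hε
  rw [noiseE_eq, totalInfluence_eq f hb]
  set w : Finset (Fin n) → ℝ := fun S => walshCoeff f S ^ 2 with hw
  have hw1 : ∑ S : Finset (Fin n), w S = 1 := parseval_one f hb
  rcases eq_or_lt_of_le hε1 with h1 | h1
  · -- ε = 1
    subst h1
    have h0 : (1:ℝ) - 1 = 0 := by norm_num
    rw [h0]
    have hI0 : 0 ≤ ∑ S : Finset (Fin n), (S.card : ℝ) * w S :=
      Finset.sum_nonneg fun S _ => mul_nonneg (Nat.cast_nonneg _) (sq_nonneg _)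
    rcases eq_or_lt_of_le hI0 with hI | hI
    · rw [← hI, Real.rpow_zero]
      have hz := (Finset.sum_eq_zero_iff_of_nonneg
        (fun S _ => mul_nonneg (Nat.cast_nonneg S.card) (sq_nonneg (walshCoeff f S)))).1 hI.symm
      have hterm : ∀ S : Finset (Fin n), w S * (0:ℝ)^S.card = w S := by
        intro S
        rcases Nat.eq_zero_or_pos S.card with h | h
        · rw [h, pow_zero, mul_one]
        · have hwS : w S = 0 := by
            have h2 := hz S (mem_univ S)
            have hcne : (S.card : ℝ) ≠ 0 := Nat.cast_ne_zero.2 h.ne'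
            exact (mul_eq_zero.1 h2).resolve_left hcne
          simp [hwS]
      rw [Finset.sum_congr rfl fun S _ => hterm S, hw1]
    · rw [Real.zero_rpow (ne_of_gt hI)]
      apply Finset.sum_nonneg
      intro S _
      have : (0:ℝ) ≤ (0:ℝ)^S.card := pow_nonneg le_rfl _
      exact mul_nonneg (sq_nonneg _) this
  · -- ε < 1
    have hc : (0:ℝ) < 1 - ε := by linarith
    set L := Real.log (1 - ε) with hL
    have hrw : (1 - ε) ^ (∑ S : Finset (Fin n), (S.card:ℝ) * w S)
        = Real.exp (∑ S : Finset (Fin n), w S • (L * S.card)) := by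
      rw [Real.rpow_def_of_pos hc]
      congr 1
      rw [Finset.mul_sum]
      exact Finset.sum_congr rfl fun S _ => by rw [smul_eq_mul]; ring
    rw [hrw]
    have hj := convexOn_exp.map_sum_le (t := Finset.univ)
      (w := w) (p := fun S : Finset (Fin n) => L * S.card)
      (fun S _ => sq_nonneg _) hw1 (fun S _ => Set.mem_univ _)
    refine hj.trans_eq ?_
    apply Finset.sum_congr rfl; intro S _
    rw [smul_eq_mul]
    congr 1
    show Real.exp (L * S.card) = (1 - ε) ^ S.card
    rw [mul_comm, Real.exp_nat_mul, Real.exp_log hc]
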